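/- arXiv:math/0609611 — 8 statements merged into one kernel-verified Lean document; each statement's English description precedes it below -/
import Mathlib

section
/- If S is a subgroup of a group Γ and S is separable in a finite-index subgroup H of Γ with S ≤ H, then S is separable in Γ. -/
open scoped Pointwise

/-- `S` is separable in `G` if for every `x ∈ G \ S` there is a finite-index
normal subgroup `N` of `G` with `x ∉ S·N`. -/
def SubgroupSeparable {G : Type*} [Group G] (S : Subgroup G) : Prop :=
  ∀ x : G, x ∉ S → ∃ N : Subgroup G, N.Normal ∧ N.FiniteIndex ∧
    x ∉ (S : Set G) * (N : Set G)

/-- If `S ≤ H ≤ Γ` with `H` of finite index in `Γ` and `S` separable in `H`,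
then `S` is separable in `Γ`. -/
theorem separable_of_separable_in_finite_index {Γ : Type*} [Group Γ]
    (H : Subgroup Γ) (S : Subgroup Γ) (hSH : S ≤ H) (hH : H.FiniteIndex)
    (hsep : SubgroupSeparable (S.subgroupOf H)) :
    SubgroupSeparable S := by
  intro x hx
  by_cases hxH : x ∈ H
  · obtain ⟨N', hN'norm, hN'fi, hN'⟩ := hsep ⟨x, hxH⟩ (by
      simpa [Subgroup.mem_subgroupOf] using hx)
    set M : Subgroup Γ := N'.map H.subtype with hM
    have hMle : M ≤ H := by
      rintro _ ⟨m, _, rfl⟩; exact m.2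
    have hMfi : M.FiniteIndex := by
      constructor
      have heq := Subgroup.relIndex_mul_index hMle
      have hrel : M.subgroupOf H = N' :=
        Subgroup.comap_map_eq_self_of_injective H.subtype_injective N'
      rw [← heq, Subgroup.relIndex, hrel]
      exact mul_ne_zero hN'fi.index_ne_zero hH.index_ne_zero
    refine ⟨M.normalCore, Subgroup.normalCore_normal M, inferInstance, ?_⟩
    rintro ⟨s, hs, n, hn, rfl⟩
    have hnM : s * n ∈ H := hxH
    have hnH : n ∈ H := hMle (M.normalCore_le hn)
    apply hN'
    refine ⟨⟨s, hSH hs⟩, hs, ⟨n, hnH⟩, ?_, rfl⟩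
    have : n ∈ M := M.normalCore_le hn
    obtain ⟨m, hm, hm2⟩ := this
    have : (⟨n, hnH⟩ : H) = m := Subtype.ext hm2.symm
    rw [this]; exact hm
  · refine ⟨H.normalCore, Subgroup.normalCore_normal H, inferInstance, ?_⟩
    rintro ⟨s, hs, n, hn, rfl⟩
    exact hxH (H.mul_mem (hSH hs) (H.normalCore_le hn))
end

section
/- Let L be a subgroup of a group G and let S be a subgroup of G containing a finite-index subgroup T that normalizes L. Then M = ⋂_{s ∈ S} L^s (the intersection of all S-conjugates of L) has finite index in L. -/
section aux

variable {G : Type*} [Group G]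

lemma conj_map_comp (a b : G) (L : Subgroup G) :
    L.map (MulAut.conj (a * b)).toMonoidHom =
      (L.map (MulAut.conj b).toMonoidHom).map (MulAut.conj a).toMonoidHom := by
  rw [Subgroup.map_map]
  congr 1
  ext x
  simp [mul_assoc]

lemma conj_map_of_mem_normalizer {t : G} {L : Subgroup G} (ht : t ∈ Subgroup.normalizer (L : Set G)) :
    L.map (MulAut.conj t).toMonoidHom = L := by
  ext x
  rw [Subgroup.mem_normalizer_iff] at ht
  constructor
  · rintro ⟨y, hy, rfl⟩
    exact (ht y).mp hy
  · intro hx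
    refine ⟨t⁻¹ * x * t, ?_, by simp [mul_assoc]⟩
    have := (ht (t⁻¹ * x * t)).mpr
    simp only [mul_assoc] at this ⊢
    exact this (by simpa [mul_assoc] using hx)

lemma conj_map_relIndex (s : G) (L K : Subgroup G) (hK : K.Normal) :
    (L.map (MulAut.conj s).toMonoidHom).relIndex K = L.relIndex K := by
  have hmap : L.map (MulAut.conj s).toMonoidHom
      = L.comap (MulAut.conj s⁻¹).toMonoidHom := by
    ext x
    constructor
    · rintro ⟨y, hy, rfl⟩
      simpa [mul_assoc] using hy
    · intro hx
      refine ⟨s⁻¹ * x * s, ?_, by simp [mul_assoc]⟩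
      simpa [mul_assoc] using hx
  have hKmap : K.map (MulAut.conj s⁻¹).toMonoidHom = K := by
    ext x
    constructor
    · rintro ⟨y, hy, rfl⟩
      simpa using hK.conj_mem y hy s⁻¹
    · intro hx
      exact ⟨s * x * s⁻¹, hK.conj_mem x hx s, by simp [mul_assoc]⟩
  rw [hmap, Subgroup.relIndex_comap, hKmap]

end aux

/-- Let `K` be a normal subgroup of `G`, `L ≤ K` of finite index in `K`,
and `S` a subgroup containing a subgroup `T` of finite index in `S` with
every element of `T` normalizing `L`.  Then the intersection
`M = ⋂_{s ∈ S} s⁻¹ L s` of all `S`-conjugates of `L` has finite index in `L`. -/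
theorem inf_conjugates_finiteIndex {G : Type*} [Group G]
    (K L S T : Subgroup G) (hK : K.Normal) (hLK : L ≤ K)
    (hL : (L.subgroupOf K).FiniteIndex)
    (hTS : T ≤ S) (hT : (T.subgroupOf S).FiniteIndex)
    (hnorm : T ≤ Subgroup.normalizer (L : Set G)) :
    ((⨅ s ∈ S, L.map (MulAut.conj (s⁻¹)).toMonoidHom).subgroupOf L).FiniteIndex := by
  classical
  set Mf : G → Subgroup G := fun g => L.map (MulAut.conj g).toMonoidHom with hMf
  set M : Subgroup G := ⨅ s ∈ S, L.map (MulAut.conj (s⁻¹)).toMonoidHom with hM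
  have hMf1 : Mf 1 = L := by
    ext x; simp [hMf]
  -- M is contained in L
  have hML : M ≤ L := by
    have h1 : M ≤ Mf (1 : G)⁻¹ := biInf_le _ S.one_mem
    rwa [inv_one, hMf1] at h1
  -- Mf is invariant under right multiplication by T
  have hinv : ∀ (s : G), ∀ t ∈ T, Mf (s * t) = Mf s := by
    intro s t ht
    rw [hMf]
    simp only
    rw [conj_map_comp, conj_map_of_mem_normalizer (hnorm ht)]
  -- the function on the finite quotient S / T
  set F : S ⧸ T.subgroupOf S → Subgroup G :=
    fun q => Quotient.liftOn' q (fun s : S => Mf (s : G)) (by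
      intro a b hab
      rw [QuotientGroup.leftRel_apply] at hab
      have hab' : ((a : G))⁻¹ * (b : G) ∈ T := by
        simpa [Subgroup.mem_subgroupOf] using hab
      have : (b : G) = (a : G) * ((a : G)⁻¹ * (b : G)) := by group
      rw [this]
      exact (hinv _ _ hab').symm) with hF
  have hFmk : ∀ s : S, F (QuotientGroup.mk s) = Mf (s : G) := fun s => rfl
  -- rewrite M as a finite infimum
  have hMeq : M = ⨅ q : S ⧸ T.subgroupOf S, F q := by
    rw [hM]
    apply le_antisymm
    · refine le_iInf fun q => ?_
      induction q using Quotient.inductionOn' with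
      | h s =>
        have : F (QuotientGroup.mk s) = Mf ((s : G)⁻¹)⁻¹ := by
          rw [hFmk, inv_inv]
        rw [show Quotient.mk'' s = QuotientGroup.mk s from rfl, this]
        exact biInf_le (fun g => Mf g⁻¹) (S.inv_mem s.2)
    · refine le_iInf₂ fun s hs => ?_
      have h := iInf_le F (QuotientGroup.mk (⟨s, hs⟩ : S)⁻¹)
      rwa [hFmk] at h
  -- each conjugate has nonzero relIndex in K
  have hLK' : L.relIndex K ≠ 0 := hL.index_ne_zero
  haveI : Finite (S ⧸ T.subgroupOf S) := Subgroup.finite_quotient_of_finiteIndex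
  have hMK : M.relIndex K ≠ 0 := by
    rw [hMeq]
    apply Subgroup.relIndex_iInf_ne_zero
    intro q
    induction q using Quotient.inductionOn' with
    | h s =>
      rw [show Quotient.mk'' s = QuotientGroup.mk s from rfl, hFmk, hMf]
      simp only
      rw [conj_map_relIndex _ _ _ hK]
      exact hLK'
  -- conclude
  have hmul : M.relIndex L * L.relIndex K = M.relIndex K :=
    Subgroup.relIndex_mul_relIndex M L K hML hLK
  have : M.relIndex L ≠ 0 := by
    intro h0
    rw [← hmul, h0, zero_mul] at hMK
    exact hMK rfl
  exact ⟨this⟩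
end

section
/- Let Γ = K ⋊ S be a semidirect product of an abelian normal subgroup K by a finitely generated subgroup S, and suppose Γ is finitely generated and residually finite. Then the closure of S in the profinite topology of Γ intersects K trivially, and consequently S is separable in Γ. -/
open scoped Pointwise

/-- The profinite topology on a group: generated by cosets of finite-index
normal subgroups. -/
def profiniteTopology (G : Type*) [Group G] : TopologicalSpace G :=
  TopologicalSpace.generateFrom
    {U : Set G | ∃ (N : Subgroup G) (g : G), N.Normal ∧ N.FiniteIndex ∧
      U = {x : G | ∃ n ∈ N, x = g * n}}

/-- Key separation lemma: every nontrivial element of `K` can be separated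
from `S` by a finite-index normal subgroup. -/
lemma key_separation {Γ : Type*} [Group Γ] (K S : Subgroup Γ) (hKn : K.Normal)
    (hdisj : K ⊓ S = ⊥) (hjoin : K ⊔ S = ⊤)
    (hrf : ∀ x : Γ, x ≠ 1 → ∃ N : Subgroup Γ, N.Normal ∧ N.FiniteIndex ∧ x ∉ N) :
    ∀ x : Γ, x ∈ K → x ≠ 1 →
      ∃ N : Subgroup Γ, N.Normal ∧ N.FiniteIndex ∧ ∀ s ∈ S, ∀ n ∈ N, x ≠ s * n := by
  classical
  intro x hxK hx1
  obtain ⟨N₀, hN₀n, hN₀f, hxN₀⟩ := hrf x hx1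
  haveI := hN₀n; haveI := hN₀f; haveI := hKn
  set M : Subgroup Γ := K ⊓ N₀ with hM
  haveI : M.Normal := Subgroup.normal_inf_normal K N₀
  set H : Subgroup Γ := M ⊔ S with hHdef
  -- `H` has finite index: the map `K ⧸ (N₀.subgroupOf K) → Γ ⧸ H` is surjective
  haveI : H.FiniteIndex := by
    haveI : (N₀.subgroupOf K).FiniteIndex := inferInstance
    have hwd : ∀ a b : K, (QuotientGroup.leftRel (N₀.subgroupOf K)) a b →
        ((a : Γ) : Γ ⧸ H) = ((b : Γ) : Γ ⧸ H) := by
      intro a b hab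
      rw [QuotientGroup.leftRel_apply] at hab
      refine (QuotientGroup.eq).2 ?_
      have hmem : (a : Γ)⁻¹ * (b : Γ) ∈ M := by
        refine ⟨?_, hab⟩
        exact K.mul_mem (K.inv_mem a.2) b.2
      exact Subgroup.mem_sup_left hmem
    let f : K ⧸ (N₀.subgroupOf K) → Γ ⧸ H :=
      fun q => Quotient.liftOn' q (fun k => ((k : Γ) : Γ ⧸ H)) hwd
    have hsurj : Function.Surjective f := by
      intro q
      obtain ⟨γ, rfl⟩ := QuotientGroup.mk_surjective q
      have hγ : γ ∈ (K : Set Γ) * (S : Set Γ) := by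
        rw [← Subgroup.normal_mul K S, hjoin]; exact Subgroup.mem_top γ
      obtain ⟨k, hk, s, hs, rfl⟩ := hγ
      refine ⟨Quotient.mk'' (⟨k, hk⟩ : K), ?_⟩
      show ((k : Γ) : Γ ⧸ H) = ((k * s : Γ) : Γ ⧸ H)
      refine (QuotientGroup.eq).2 ?_
      have : k⁻¹ * (k * s) = s := by group
      rw [this]
      exact Subgroup.mem_sup_right hs
    haveI : Finite (Γ ⧸ H) := Finite.of_surjective f hsurj
    exact Subgroup.finiteIndex_of_finite_quotient
  refine ⟨H.normalCore, H.normalCore_normal, inferInstance, ?_⟩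
  intro s hs n hn heq
  have hnH : n ∈ (M : Set Γ) * (S : Set Γ) := by
    rw [← Subgroup.normal_mul M S]
    exact H.normalCore_le hn
  obtain ⟨m, hm, t, ht, rfl⟩ := hnH
  -- x = s * (m * t) = (s m s⁻¹) * (s t)
  have hm₂ : s * m * s⁻¹ ∈ M := (‹M.Normal›).conj_mem m hm s
  have hcalc : (s * m * s⁻¹)⁻¹ * x = s * t := by
    rw [heq]; group
  have hKmem : (s * m * s⁻¹)⁻¹ * x ∈ K := K.mul_mem (K.inv_mem hm₂.1) hxK
  have hSmem : (s * m * s⁻¹)⁻¹ * x ∈ S := by rw [hcalc]; exact S.mul_mem hs ht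
  have hbot : (s * m * s⁻¹)⁻¹ * x ∈ K ⊓ S := ⟨hKmem, hSmem⟩
  rw [hdisj, Subgroup.mem_bot] at hbot
  have hxM : x = s * m * s⁻¹ := (inv_mul_eq_one.mp hbot).symm
  exact hxN₀ (hxM ▸ hm₂.2)

/-- If `Γ = K ⋊ S` with `K` abelian normal and `S` finitely generated, and `Γ`
is finitely generated and residually finite, then the profinite closure of `S`
meets `K` trivially; consequently `S` is closed in the profinite topology. -/
theorem closure_inter_abelian_kernel_trivial {Γ : Type*} [Group Γ]
    (K S : Subgroup Γ) (hKn : K.Normal)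
    (hKab : ∀ x y : Γ, x ∈ K → y ∈ K → x * y = y * x)
    (hdisj : K ⊓ S = ⊥) (hjoin : K ⊔ S = ⊤)
    (hSfg : S.FG) (hfg : Group.FG Γ)
    (hrf : ∀ x : Γ, x ≠ 1 → ∃ N : Subgroup Γ, N.Normal ∧ N.FiniteIndex ∧ x ∉ N) :
    (@closure Γ (profiniteTopology Γ) (S : Set Γ)) ∩ (K : Set Γ) = {1} ∧
      @IsClosed Γ (profiniteTopology Γ) (S : Set Γ) := by
  classical
  letI : TopologicalSpace Γ := profiniteTopology Γ
  have key := key_separation K S hKn hdisj hjoin hrf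
  have hopen : ∀ (N : Subgroup Γ) (g : Γ), N.Normal → N.FiniteIndex →
      IsOpen {x : Γ | ∃ n ∈ N, x = g * n} := fun N g h1 h2 =>
    TopologicalSpace.isOpen_generateFrom_of_mem ⟨N, g, h1, h2, rfl⟩
  constructor
  · ext x
    simp only [Set.mem_inter_iff, Set.mem_singleton_iff]
    constructor
    · rintro ⟨hxc, hxK⟩
      by_contra hx1
      obtain ⟨N, hNn, hNf, hprop⟩ := key x hxK hx1
      have hU := hopen N x hNn hNf
      have hmem : x ∈ {y : Γ | ∃ n ∈ N, y = x * n} := ⟨1, N.one_mem, (mul_one x).symm⟩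
      obtain ⟨y, ⟨n, hn, hy⟩, hyS⟩ := mem_closure_iff.mp hxc _ hU hmem
      have : x = y * n⁻¹ := by rw [hy]; group
      exact hprop y hyS n⁻¹ (N.inv_mem hn) this
    · rintro rfl
      exact ⟨subset_closure S.one_mem, K.one_mem⟩
  · rw [← isOpen_compl_iff, isOpen_iff_forall_mem_open]
    intro g hg
    have hγ : g ∈ (K : Set Γ) * (S : Set Γ) := by
      rw [← Subgroup.normal_mul K S, hjoin]; exact Subgroup.mem_top g
    obtain ⟨k, hk, s, hs, rfl⟩ := hγ
    have hk1 : k ≠ 1 := by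
      rintro rfl
      exact hg (by simpa using hs)
    obtain ⟨N, hNn, hNf, hprop⟩ := key k hk hk1
    refine ⟨{x : Γ | ∃ n ∈ N, x = (k * s) * n}, ?_, hopen N (k * s) hNn hNf,
      ⟨1, N.one_mem, (mul_one _).symm⟩⟩
    rintro y ⟨n, hn, rfl⟩ hyS
    have hn' : s * n⁻¹ * s⁻¹ ∈ N := hNn.conj_mem n⁻¹ (N.inv_mem hn) s
    have hS' : (k * s * n) * s⁻¹ ∈ S := S.mul_mem hyS (S.inv_mem hs)
    have : k = ((k * s * n) * s⁻¹) * (s * n⁻¹ * s⁻¹) := by group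
    exact hprop _ hS' _ hn' this
end

section
/- If A and Q are finitely generated abelian groups, then the restricted wreath product A ≀ Q is finitely generated and residually finite. -/
/-- The restricted direct power `A^{(Q)}`: finitely supported functions
`Q → A` under pointwise multiplication. -/
abbrev RestrictedPower (Q A : Type*) [Group A] : Type _ :=
  Multiplicative (Q →₀ Additive A)

/-- Translation of coordinates by `q : Q`, as an additive automorphism of
`Q →₀ Additive A`. -/
def translationAut {A Q : Type*} [Group A] [Group Q] (q : Q) :
    (Q →₀ Additive A) ≃+ (Q →₀ Additive A) :=
  { Finsupp.equivCongrLeft (Equiv.mulLeft q) with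
    map_add' := fun f g => by
      ext x
      simp [Finsupp.equivCongrLeft, Finsupp.equivMapDomain_apply] }

/-- `Q` acts on `A^{(Q)}` by translation of coordinates. -/
noncomputable def wreathAction (A Q : Type*) [Group A] [Group Q] :
    Q →* MulAut (RestrictedPower Q A) where
  toFun q := AddEquiv.toMultiplicative (translationAut (A := A) q)
  map_one' := by
    apply MulEquiv.toEquiv_injective
    ext f : 1
    refine Multiplicative.toAdd.injective ?_
    ext x
    simp [translationAut, Finsupp.equivCongrLeft, Finsupp.equivMapDomain_apply]
    rfl
  map_mul' q₁ q₂ := by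
    apply MulEquiv.toEquiv_injective
    ext f : 1
    refine Multiplicative.toAdd.injective ?_
    ext x
    have h : (Equiv.mulLeft q₁ * Equiv.mulLeft q₂).symm x = q₂⁻¹ * (q₁⁻¹ * x) := rfl
    simp [translationAut, Finsupp.equivCongrLeft, Finsupp.equivMapDomain_apply, h]

/-- The restricted wreath product `A ≀ Q = A^{(Q)} ⋊ Q`. -/
abbrev WreathProduct (A Q : Type*) [Group A] [Group Q] : Type _ :=
  SemidirectProduct (RestrictedPower Q A) Q (wreathAction A Q)

/-- Any nonzero element of a f.g. abelian group is detected by a hom to a finite group. -/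
lemma sep_add (G : Type*) [AddCommGroup G] [AddGroup.FG G] (g : G) (hg : g ≠ 0) :
    ∃ (F : Type) (_ : AddCommGroup F) (_ : Finite F) (φ : G →+ F), φ g ≠ 0 := by
  obtain ⟨n, ι, fι, p, hp, e, ⟨eq⟩⟩ := AddCommGroup.equiv_free_prod_directSum_zmod G
  haveI : ∀ i, NeZero (p i ^ e i) := fun i => ⟨pow_ne_zero _ (hp i).ne_zero⟩
  by_cases hv : (eq g).2 = 0
  · -- free part is nonzero
    have hu : (eq g).1 ≠ 0 := by
      intro hu
      apply hg
      have : eq g = 0 := Prod.ext hu hv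
      simpa using congrArg eq.symm this
    obtain ⟨i, hi⟩ : ∃ i, (eq g).1 i ≠ 0 := by
      by_contra h
      push_neg at h
      exact hu (Finsupp.ext h)
    refine ⟨ZMod (((eq g).1 i).natAbs + 1), inferInstance, inferInstance,
      (Int.castAddHom (ZMod (((eq g).1 i).natAbs + 1))).comp
        ((Finsupp.applyAddHom i).comp
          ((AddMonoidHom.fst _ _).comp eq.toAddMonoidHom)), ?_⟩
    simp only [AddMonoidHom.comp_apply, AddEquiv.toAddMonoidHom_eq_coe,
      AddMonoidHom.coe_coe, Finsupp.applyAddHom_apply,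
      Int.coe_castAddHom]
    intro h0
    rw [ZMod.intCast_zmod_eq_zero_iff_dvd] at h0
    have h3 := Int.le_of_dvd (abs_pos.mpr hi) ((dvd_abs _ _).mpr h0)
    rw [Int.abs_eq_natAbs] at h3
    omega
  · haveI : Finite (DirectSum ι fun i => ZMod (p i ^ e i)) :=
      Finite.of_equiv _ DFinsupp.equivFunOnFintype.symm
    exact ⟨(DirectSum ι fun i => ZMod (p i ^ e i)), inferInstance, inferInstance,
      (AddMonoidHom.snd _ _).comp eq.toAddMonoidHom, hv⟩

/-- Multiplicative version of `sep_add`. -/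
lemma sep_mul (Q : Type*) [CommGroup Q] [Group.FG Q] (q : Q) (hq : q ≠ 1) :
    ∃ (F : Type) (_ : CommGroup F) (_ : Finite F) (φ : Q →* F), φ q ≠ 1 := by
  obtain ⟨F, _, _, φ, hφ⟩ := sep_add (Additive Q) (Additive.ofMul q) (by simpa using hq)
  exact ⟨Multiplicative F, inferInstance, inferInstance,
    AddMonoidHom.toMultiplicativeRight φ, by simpa using hφ⟩

/-- A finite set of nontrivial elements of a f.g. abelian group is detected by a single
hom to a finite group. -/
lemma sep_finset (Q : Type*) [CommGroup Q] [Group.FG Q] (T : Finset Q) (hT : (1 : Q) ∉ T) :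
    ∃ (F : Type) (_ : CommGroup F) (_ : Finite F) (φ : Q →* F), ∀ t ∈ T, φ t ≠ 1 := by
  classical
  induction T using Finset.induction_on with
  | empty => exact ⟨PUnit, inferInstance, inferInstance, 1, by simp⟩
  | @insert a s ha ih =>
    obtain ⟨F, _, _, φ, hφ⟩ := ih (fun h => hT (Finset.mem_insert_of_mem h))
    obtain ⟨F', _, _, ψ, hψ⟩ := sep_mul Q a (fun h => hT (h ▸ Finset.mem_insert_self a s))
    refine ⟨F × F', inferInstance, inferInstance, φ.prod ψ, ?_⟩
    intro t ht
    rcases Finset.mem_insert.mp ht with rfl | ht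
    · intro h
      exact hψ (congrArg Prod.snd h)
    · intro h
      exact hφ t ht (congrArg Prod.fst h)

open SemidirectProduct in
/-- The copy of `A` sitting at coordinate `1` inside the wreath product. -/
noncomputable def jhom (A Q : Type*) [CommGroup A] [CommGroup Q] : A →* WreathProduct A Q :=
  SemidirectProduct.inl.comp
    (AddMonoidHom.toMultiplicativeRight
      (Finsupp.singleAddHom (1 : Q) : Additive A →+ (Q →₀ Additive A)))

open SemidirectProduct in
lemma wreath_fg {A Q : Type*} [CommGroup A] [CommGroup Q]
    (hA : Group.FG A) (hQ : Group.FG Q) : Group.FG (WreathProduct A Q) := by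
  classical
  obtain ⟨SA, hSA, hSAfin⟩ := Group.fg_iff.mp hA
  obtain ⟨SQ, hSQ, hSQfin⟩ := Group.fg_iff.mp hQ
  refine Group.fg_iff.mpr ⟨jhom A Q '' SA ∪ (inr : Q →* WreathProduct A Q) '' SQ, ?_,
    (hSAfin.image _).union (hSQfin.image _)⟩
  set H := Subgroup.closure (jhom A Q '' SA ∪ (inr : Q →* WreathProduct A Q) '' SQ) with hH
  rw [eq_top_iff]
  have hr : ∀ q : Q, (inr q : WreathProduct A Q) ∈ H := by
    have h1 : Subgroup.closure SQ ≤ H.comap inr :=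
      (Subgroup.closure_le _).mpr fun q hq => Subgroup.subset_closure (Or.inr ⟨q, hq, rfl⟩)
    intro q
    exact h1 (hSQ ▸ Subgroup.mem_top q)
  have hj : ∀ a : A, jhom A Q a ∈ H := by
    have h1 : Subgroup.closure SA ≤ H.comap (jhom A Q) :=
      (Subgroup.closure_le _).mpr fun a ha => Subgroup.subset_closure (Or.inl ⟨a, ha, rfl⟩)
    intro a
    exact h1 (hSA ▸ Subgroup.mem_top a)
  have hsingle : ∀ (q : Q) (a : Additive A),
      (inl (Multiplicative.ofAdd (Finsupp.single q a)) : WreathProduct A Q) ∈ H := by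
    intro q a
    have key : (wreathAction A Q q) (Multiplicative.ofAdd (Finsupp.single (1 : Q) a))
        = Multiplicative.ofAdd (Finsupp.single q a) := by
      show Multiplicative.ofAdd
          (Finsupp.equivMapDomain (Equiv.mulLeft q) (Finsupp.single (1 : Q) a)) = _
      rw [Finsupp.equivMapDomain_single]
      simp
    rw [← key, inl_aut]
    exact mul_mem (mul_mem (hr q) (hj a.toMul)) (hr q⁻¹)
  have hbase : ∀ f : Q →₀ Additive A,
      (inl (Multiplicative.ofAdd f) : WreathProduct A Q) ∈ H := by
    intro f
    induction f using Finsupp.induction with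
    | zero =>
      have : (Multiplicative.ofAdd (0 : Q →₀ Additive A)) = 1 := rfl
      rw [this, map_one]
      exact one_mem H
    | single_add q b f _ _ ih =>
      have : (inl (Multiplicative.ofAdd (Finsupp.single q b + f)) : WreathProduct A Q)
          = inl (Multiplicative.ofAdd (Finsupp.single q b)) * inl (Multiplicative.ofAdd f) := by
        rw [← map_mul]
        rfl
      rw [this]
      exact mul_mem (hsingle q b) ih
  intro x _
  rw [← inl_left_mul_inr_right x]
  exact mul_mem (by simpa using hbase x.left.toAdd) (hr x.right)

open SemidirectProduct

/-- If `A` and `Q` are finitely generated abelian groups, then `A ≀ Q` is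
finitely generated and residually finite. -/
theorem wreath_fg_and_residuallyFinite (A Q : Type*) [CommGroup A] [CommGroup Q]
    (hA : Group.FG A) (hQ : Group.FG Q) :
    Group.FG (WreathProduct A Q) ∧
      (∀ x : WreathProduct A Q, x ≠ 1 →
        ∃ N : Subgroup (WreathProduct A Q), N.Normal ∧ N.FiniteIndex ∧ x ∉ N) := by
  classical
  haveI := hA
  haveI := hQ
  refine ⟨wreath_fg hA hQ, ?_⟩
  intro x hx
  by_cases hxr : x.right = 1
  case neg =>
    obtain ⟨F, _, _, φ, hφ⟩ := sep_mul Q x.right hxr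
    have hker : x ∉ (φ.comp (rightHom : WreathProduct A Q →* Q)).ker := by
      rw [MonoidHom.mem_ker]
      exact hφ
    exact ⟨_, inferInstance, Subgroup.finiteIndex_ker _, hker⟩
  case pos =>
    set f₀ : Q →₀ Additive A := Multiplicative.toAdd x.left with hf₀def
    have hf : f₀ ≠ 0 := by
      intro h
      apply hx
      have hleft : x.left = 1 := by
        have := congrArg Multiplicative.ofAdd h
        simpa [hf₀def] using this
      rw [← inl_left_mul_inr_right x, hleft, hxr]
      simp
    obtain ⟨q₀, hq₀⟩ := Finsupp.support_nonempty_iff.mpr hf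
    have hq₀v : f₀ q₀ ≠ 0 := Finsupp.mem_support_iff.mp hq₀
    obtain ⟨FA, _, _, α, hα⟩ := sep_add (Additive A) (f₀ q₀) hq₀v
    set T : Finset Q := (f₀.support.erase q₀).image (fun q => q * q₀⁻¹) with hTdef
    have hT : (1 : Q) ∉ T := by
      intro h
      obtain ⟨q, hq, hq1⟩ := Finset.mem_image.mp h
      have : q = q₀ := by
        have := mul_inv_eq_one.mp hq1
        exact this
      exact (Finset.mem_erase.mp hq).1 this
    obtain ⟨FQ, _, _, β, hβ⟩ := sep_finset Q T hT
    -- the target finite wreath product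
    let A' := Multiplicative FA
    let α' : Additive A →+ Additive A' :=
      ((AddEquiv.additiveMultiplicative FA).symm.toAddMonoidHom).comp α
    let Bh : (Q →₀ Additive A) →+ (FQ →₀ Additive A') :=
      (Finsupp.mapDomain.addMonoidHom β).comp (Finsupp.mapRange.addMonoidHom α')
    let F1 : RestrictedPower Q A →* RestrictedPower FQ A' :=
      AddMonoidHom.toMultiplicative Bh
    have hcomm : ∀ g : Q, F1.comp ((wreathAction A Q) g).toMonoidHom
        = ((wreathAction A' FQ) (β g)).toMonoidHom.comp F1 := by
      intro g
      refine MonoidHom.ext fun f => ?_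
      refine Multiplicative.toAdd.injective ?_
      show Finsupp.mapDomain β
          (Finsupp.mapRange α' (map_zero α')
            (Finsupp.equivMapDomain (Equiv.mulLeft g) (Multiplicative.toAdd f)))
        = Finsupp.equivMapDomain (Equiv.mulLeft (β g))
            (Finsupp.mapDomain β
              (Finsupp.mapRange α' (map_zero α') (Multiplicative.toAdd f)))
      rw [Finsupp.equivMapDomain_eq_mapDomain, Finsupp.equivMapDomain_eq_mapDomain,
        ← Finsupp.mapDomain_mapRange _ _ _ (map_zero α') (fun x y => map_add α' x y),
        ← Finsupp.mapDomain_comp, ← Finsupp.mapDomain_comp]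
      congr 1
      funext y
      show β (g * y) = β g * β y
      exact map_mul β g y
    let Ψ : WreathProduct A Q →* WreathProduct A' FQ :=
      SemidirectProduct.map F1 β hcomm
    -- finiteness of the target
    haveI : Finite (FQ →₀ Additive A') :=
      Finite.of_equiv _ Finsupp.equivFunOnFinite.symm
    haveI : Finite (WreathProduct A' FQ) := by
      refine Finite.of_injective
        (fun w : WreathProduct A' FQ => (w.left, w.right)) ?_
      intro a b h
      have h1 := congrArg Prod.fst h
      have h2 := congrArg Prod.snd h
      cases a
      cases b
      simp_all
    -- Ψ does not kill x
    have hg0 : Finsupp.mapRange α' (map_zero α') f₀ q₀ ≠ 0 := by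
      rw [Finsupp.mapRange_apply]
      intro h
      exact hα ((AddEquiv.additiveMultiplicative FA).symm.injective
        (by simpa [α'] using h))
    have hval : (Bh f₀) (β q₀)
        = Finsupp.mapRange α' (map_zero α') f₀ q₀ := by
      show (Finsupp.mapDomain β (Finsupp.mapRange α' (map_zero α') f₀)) (β q₀) = _
      set g : Q →₀ Additive A' := Finsupp.mapRange α' (map_zero α') f₀ with hgdef
      rw [Finsupp.mapDomain, Finsupp.sum_apply, Finsupp.sum]
      rw [Finset.sum_eq_single q₀]
      · rw [Finsupp.single_eq_same]
      · intro q hq hne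
        rw [Finsupp.single_apply, if_neg]
        intro hEq
        have hqs : q ∈ f₀.support := Finsupp.support_mapRange hq
        have hmem : q * q₀⁻¹ ∈ T :=
          Finset.mem_image.mpr ⟨q, Finset.mem_erase.mpr ⟨hne, hqs⟩, rfl⟩
        apply hβ _ hmem
        rw [map_mul, map_inv, hEq, mul_inv_cancel]
      · intro hq₀s
        rw [Finsupp.notMem_support_iff.mp hq₀s, Finsupp.single_zero, Finsupp.coe_zero,
          Pi.zero_apply]
    have hΨx : Ψ x ≠ 1 := by
      intro h
      have hxeq : x = inl x.left := by
        rw [← inl_left_mul_inr_right x, hxr]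
        simp
      rw [hxeq, map_inl] at h
      have hF1 : F1 x.left = 1 := by
        have := congrArg SemidirectProduct.left h
        simpa using this
      have hBh : Bh f₀ = 0 := by
        have := congrArg Multiplicative.toAdd hF1
        simpa [F1, hf₀def] using this
      rw [hBh] at hval
      exact hg0 (by simpa using hval.symm)
    have hker : x ∉ Ψ.ker := by
      rw [MonoidHom.mem_ker]
      exact hΨx
    exact ⟨_, inferInstance, Subgroup.finiteIndex_ker _, hker⟩
end

section
/- Let Q be a finitely generated abelian group and R a subgroup of Q. Then there exists a subgroup R₁ of Q containing R with R of finite index in R₁, and a homomorphism π : Q → R₁ such that π(r) = r for all r ∈ R (i.e., R₁ is a retract of Q containing R with finite index). -/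
/-- In a finitely generated abelian group `Q`, every subgroup `R` is contained
with finite index in a retract `R₁` of `Q`: there is `π : Q → R₁` fixing `R`
pointwise. -/
theorem exists_retract_containing_finite_index {Q : Type*} [CommGroup Q]
    (hQ : Group.FG Q) (R : Subgroup Q) :
    ∃ R₁ : Subgroup Q, R ≤ R₁ ∧ (R.subgroupOf R₁).FiniteIndex ∧
      ∃ π : Q →* R₁, ∀ r ∈ R, (π r : Q) = r := by
  classical
  haveI := hQ
  -- `R₁` is the preimage of the torsion subgroup of `Q ⧸ R`.
  set R₁ : Subgroup Q := (CommGroup.torsion (Q ⧸ R)).comap (QuotientGroup.mk' R) with hR₁def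
  have hmem : ∀ q : Q, q ∈ R₁ ↔ IsOfFinOrder ((q : Q ⧸ R)) := fun q => Iff.rfl
  have hRR₁ : R ≤ R₁ := by
    intro r hr
    rw [hmem]
    have h1 : ((r : Q ⧸ R)) = 1 := (QuotientGroup.eq_one_iff r).2 hr
    rw [h1]
    exact IsOfFinOrder.one
  -- `Q` is a Noetherian `ℤ`-module, so `R₁` is finitely generated.
  haveI : Module.Finite ℤ (Additive Q) := Module.Finite.iff_addGroup_fg.mpr inferInstance
  haveI : IsNoetherian ℤ (Additive Q) := isNoetherian_of_isNoetherianRing_of_finite ℤ _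
  haveI hfgR₁ : Group.FG R₁ := by
    rw [Group.fg_iff_subgroup_fg, Subgroup.fg_iff_add_fg]
    have h := IsNoetherian.noetherian (AddSubgroup.toIntSubmodule R₁.toAddSubgroup)
    rwa [Submodule.fg_iff_addSubgroup_fg, AddSubgroup.toIntSubmodule_toAddSubgroup] at h
  -- `R₁ ⧸ R` is a finitely generated torsion abelian group, hence finite.
  have htor : Monoid.IsTorsion (R₁ ⧸ R.subgroupOf R₁) := by
    intro x
    induction x using QuotientGroup.induction_on with
    | H q =>
      obtain ⟨n, hn, hqn⟩ := isOfFinOrder_iff_pow_eq_one.1 ((hmem (q : Q)).1 q.2)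
      refine isOfFinOrder_iff_pow_eq_one.2 ⟨n, hn, ?_⟩
      have hmemR : q ^ n ∈ R.subgroupOf R₁ := by
        rw [Subgroup.mem_subgroupOf]
        have h2 : (((q : Q) ^ n : Q) : Q ⧸ R) = 1 := by
          simpa using hqn
        simpa using (QuotientGroup.eq_one_iff _).1 h2
      have h3 : ((q ^ n : R₁) : R₁ ⧸ R.subgroupOf R₁) = 1 :=
        (QuotientGroup.eq_one_iff _).2 hmemR
      simpa using h3
  haveI : Finite (R₁ ⧸ R.subgroupOf R₁) := CommGroup.finite_of_fg_torsion _ htor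
  haveI hFI : (R.subgroupOf R₁).FiniteIndex := Subgroup.finiteIndex_of_finite_quotient
  -- `Q ⧸ R₁` is torsion-free.
  have htf : ∀ x : Q ⧸ R₁, IsOfFinOrder x → x = 1 := by
    intro x hx
    induction x using QuotientGroup.induction_on with
    | H q =>
      obtain ⟨n, hn, hqn⟩ := isOfFinOrder_iff_pow_eq_one.1 hx
      have h1 : q ^ n ∈ R₁ := (QuotientGroup.eq_one_iff _).1 (by simpa using hqn)
      obtain ⟨m, hm, hqm⟩ := isOfFinOrder_iff_pow_eq_one.1 ((hmem (q ^ n)).1 h1)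
      refine (QuotientGroup.eq_one_iff q).2 ?_
      rw [hmem]
      refine isOfFinOrder_iff_pow_eq_one.2 ⟨n * m, mul_pos hn hm, ?_⟩
      rw [pow_mul]
      rw [QuotientGroup.mk_pow] at hqm
      exact hqm
  haveI : NoZeroSMulDivisors ℤ (Additive (Q ⧸ R₁)) := by
    refine @IsAddTorsionFree.to_noZeroSMulDivisors_int _ _ (isAddTorsionFree_iff_not_isOfFinAddOrder.2 ?_)
    intro g hg hfin
    exact hg <| htf g.toMul (isOfFinAddOrder_ofMul_iff.1 hfin)
  haveI : Module.Finite ℤ (Additive (Q ⧸ R₁)) := Module.Finite.iff_addGroup_fg.mpr inferInstance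
  -- `Q ⧸ R₁` is free, hence projective: the quotient map splits.
  let f : Additive Q →ₗ[ℤ] Additive (Q ⧸ R₁) :=
    (MonoidHom.toAdditive (QuotientGroup.mk' R₁)).toIntLinearMap
  have hfsurj : Function.Surjective f := QuotientGroup.mk'_surjective R₁
  obtain ⟨s, hs⟩ := Module.projective_lifting_property f LinearMap.id hfsurj
  let σ : (Q ⧸ R₁) →* Q := MonoidHom.toAdditive.symm s.toAddMonoidHom
  have hσ : ∀ x : Q ⧸ R₁, ((σ x : Q) : Q ⧸ R₁) = x := by
    intro x
    exact congrArg Additive.toMul (LinearMap.congr_fun hs (Additive.ofMul x))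
  have hmemπ : ∀ q : Q, q * (σ (q : Q ⧸ R₁))⁻¹ ∈ R₁ := by
    intro q
    refine (QuotientGroup.eq_one_iff _).1 ?_
    rw [QuotientGroup.mk_mul, QuotientGroup.mk_inv, hσ, mul_inv_cancel]
  refine ⟨R₁, hRR₁, hFI, ?_⟩
  refine ⟨MonoidHom.mk' (fun q => ⟨q * (σ (q : Q ⧸ R₁))⁻¹, hmemπ q⟩) ?_, ?_⟩
  · intro a b
    ext
    show (a * b) * (σ ((a * b : Q) : Q ⧸ R₁))⁻¹ =
      (a * (σ (a : Q ⧸ R₁))⁻¹) * (b * (σ (b : Q ⧸ R₁))⁻¹)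
    rw [QuotientGroup.mk_mul, map_mul, mul_inv]
    exact mul_mul_mul_comm a b _ _
  · intro r hr
    have h1 : ((r : Q ⧸ R₁)) = 1 := (QuotientGroup.eq_one_iff r).2 (hRR₁ hr)
    show r * (σ ((r : Q) : Q ⧸ R₁))⁻¹ = r
    rw [h1, map_one, inv_one, mul_one]
end

section
/- Let Q be a finitely generated abelian group of rank greater than 1 and R a nontrivial subgroup of Q of infinite index. Then Q contains a finite-index subgroup of the form R₁ × R₂ where R₁ and R₂ are both infinite, R₁ contains a finite-index subgroup of R, and the image of R in R₂ under the projection is finite. -/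
section Aux

variable {Q : Type*} [CommGroup Q]

/-- The isolator (purification) of a subgroup of an abelian group:
elements some positive power of which lies in the subgroup. -/
def isolatorSubgroup (R : Subgroup Q) : Subgroup Q where
  carrier := {q | ∃ n : ℕ, 0 < n ∧ q ^ n ∈ R}
  one_mem' := ⟨1, one_pos, by simpa using R.one_mem⟩
  mul_mem' := by
    rintro a b ⟨m, hm, ha⟩ ⟨n, hn, hb⟩
    refine ⟨m * n, Nat.mul_pos hm hn, ?_⟩
    rw [mul_pow]
    exact R.mul_mem (by rw [pow_mul]; exact pow_mem ha n)
      (by rw [mul_comm m n, pow_mul]; exact pow_mem hb m)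
  inv_mem' := by
    rintro a ⟨n, hn, ha⟩
    exact ⟨n, hn, by rw [inv_pow]; exact R.inv_mem ha⟩

lemma le_isolatorSubgroup (R : Subgroup Q) : R ≤ isolatorSubgroup R :=
  fun q hq => ⟨1, one_pos, by simpa using hq⟩

lemma isolatorSubgroup_saturated (R : Subgroup Q) {q : Q} {n : ℕ} (hn : 0 < n)
    (h : q ^ n ∈ isolatorSubgroup R) : q ∈ isolatorSubgroup R := by
  obtain ⟨m, hm, hmem⟩ := h
  exact ⟨n * m, Nat.mul_pos hn hm, by rwa [pow_mul]⟩

lemma infinite_of_le {G : Type*} [Group G] {H K : Subgroup G} (h : H ≤ K)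
    (hH : Infinite H) : Infinite K :=
  Infinite.of_injective (Subgroup.inclusion h) (Subgroup.inclusion_injective h)

lemma infinite_map {G G' : Type*} [Group G] [Group G'] (f : G →* G')
    (hf : Function.Injective f) (H : Subgroup G) (hH : Infinite H) :
    Infinite (H.map f) :=
  Infinite.of_injective (fun x : H => (⟨f x, Subgroup.mem_map_of_mem f x.2⟩ : H.map f))
    (fun a b hab => by
      apply Subtype.ext
      exact hf (congrArg Subtype.val hab))

/-- A subgroup of a commutative group built from a `ℤ`-submodule of the additivization. -/
def submoduleToSubgroup {G : Type*} [CommGroup G] (p : Submodule ℤ (Additive G)) :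
    Subgroup G where
  carrier := {g | Additive.ofMul g ∈ p}
  one_mem' := p.zero_mem
  mul_mem' := fun h1 h2 => p.add_mem h1 h2
  inv_mem' := fun h => p.neg_mem h

lemma mem_submoduleToSubgroup {G : Type*} [CommGroup G] (p : Submodule ℤ (Additive G))
    (g : G) : g ∈ submoduleToSubgroup p ↔ Additive.ofMul g ∈ p := Iff.rfl

end Aux

/-- Let `Q` be a finitely generated abelian group of free rank at least 2
(witnessed by an embedding of `ℤ × ℤ`) and `R` a nontrivial subgroup of
infinite index.  Then `Q` has a finite-index subgroup `R₁ × R₂` (internal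
direct product) with `R₁, R₂` infinite, such that `R₁` contains a finite-index
subgroup of `R` and the image of `R` in `R₂` under the projection is finite. -/
theorem exists_direct_decomposition {Q : Type*} [CommGroup Q]
    (hQ : Group.FG Q)
    (hrank : ∃ g : Multiplicative (ℤ × ℤ) →* Q, Function.Injective g)
    (R : Subgroup Q) (hR : R ≠ ⊥) (hRidx : R.index = 0) :
    ∃ R₁ R₂ : Subgroup Q, R₁ ⊓ R₂ = ⊥ ∧ (R₁ ⊔ R₂).FiniteIndex ∧
      Infinite R₁ ∧ Infinite R₂ ∧
      (∃ R' : Subgroup Q, R' ≤ R ⊓ R₁ ∧ (R'.subgroupOf R).FiniteIndex) ∧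
      {r₂ : Q | r₂ ∈ R₂ ∧ ∃ r₁ ∈ R₁, r₁ * r₂ ∈ R}.Finite := by
  classical
  haveI := hQ
  set S : Subgroup Q := isolatorSubgroup R with hS
  have hRS : R ≤ S := le_isolatorSubgroup R
  -- the quotient is torsion-free
  have htf : ∀ y : Q ⧸ S, ∀ n : ℕ, 0 < n → y ^ n = 1 → y = 1 := by
    intro y n hn hyn
    induction y using QuotientGroup.induction_on with
    | H q =>
      rw [← QuotientGroup.mk_pow, QuotientGroup.eq_one_iff] at hyn
      rw [QuotientGroup.eq_one_iff]
      exact isolatorSubgroup_saturated R hn hyn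
  -- S is not the whole group
  have hSne : S ≠ ⊤ := by
    intro htop
    have htor : Monoid.IsTorsion (Q ⧸ R) := by
      intro y
      induction y using QuotientGroup.induction_on with
      | H q =>
        have hq : q ∈ S := htop ▸ Subgroup.mem_top q
        obtain ⟨n, hn, hmem⟩ := hq
        exact isOfFinOrder_iff_pow_eq_one.mpr
          ⟨n, hn, by rw [← QuotientGroup.mk_pow, QuotientGroup.eq_one_iff]; exact hmem⟩
    haveI : Finite (Q ⧸ R) := CommGroup.finite_of_fg_torsion (Q ⧸ R) htor
    exact R.index_ne_zero_of_finite hRidx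
  -- module instances on the additivization of the quotient
  haveI : Module.Finite ℤ (Additive (Q ⧸ S)) :=
    Module.Finite.iff_addGroup_fg.mpr (GroupFG.iff_add_fg.mp inferInstance)
  haveI : NoZeroSMulDivisors ℤ (Additive (Q ⧸ S)) := by
    refine ⟨fun {c x} h => ?_⟩
    by_cases hc : c = 0
    · exact Or.inl hc
    · refine Or.inr ?_
      have hnat : (c.natAbs : ℤ) • x = 0 := by
        rcases Int.natAbs_eq c with he | he
        · rw [← he]; exact h
        · have h2 : (c.natAbs : ℤ) • x = -(c • x) := by
            rw [he]; simp
          rw [h2, h, neg_zero]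
      rw [natCast_zsmul] at hnat
      have : (Additive.toMul x) ^ c.natAbs = 1 := by
        have := congrArg Additive.toMul hnat
        simpa using this
      have := htf (Additive.toMul x) c.natAbs (Int.natAbs_pos.mpr hc) this
      simpa using this
  obtain ⟨n, b⟩ := Module.basisOfFiniteTypeTorsionFree' (R := ℤ) (M := Additive (Q ⧸ S))
  -- the projection and a section of it
  set π : Q →* Q ⧸ S := QuotientGroup.mk' S with hπdef
  have hπ : Function.Surjective π := QuotientGroup.mk'_surjective S
  set πₗ : Additive Q →ₗ[ℤ] Additive (Q ⧸ S) :=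
    (MonoidHom.toAdditive π).toIntLinearMap with hπₗ
  have l : ∀ y : Q ⧸ S, {q : Q // π q = y} := fun y => ⟨(hπ y).choose, (hπ y).choose_spec⟩
  set σₗ : Additive (Q ⧸ S) →ₗ[ℤ] Additive Q :=
    b.constr ℕ (fun i => Additive.ofMul (l (Additive.toMul (b i))).1) with hσₗ
  have hsecl : ∀ y : Additive (Q ⧸ S), πₗ (σₗ y) = y := by
    have : πₗ.comp σₗ = LinearMap.id := by
      refine b.ext fun i => ?_
      simp only [LinearMap.comp_apply, LinearMap.id_apply, hσₗ, Module.Basis.constr_basis]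
      have h1 : πₗ (Additive.ofMul (l (Additive.toMul (b i))).1)
          = Additive.ofMul (π (l (Additive.toMul (b i))).1) := rfl
      rw [h1, (l (Additive.toMul (b i))).2]
      simp
    intro y
    have := congrArg (fun f => f y) this
    simpa using this
  set σ : Q ⧸ S →* Q := MonoidHom.toAdditive.symm σₗ.toAddMonoidHom with hσdef
  have hσ : ∀ y : Q ⧸ S, π (σ y) = y := by
    intro y
    have : Additive.ofMul (π (σ y)) = Additive.ofMul y := hsecl (Additive.ofMul y)
    exact Additive.ofMul.injective this
  have hσinj : Function.Injective σ := by
    intro a c h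
    rw [← hσ a, ← hσ c, h]
  have hker : ∀ q : Q, q ∈ S → π q = 1 := by
    intro q hq
    rwa [hπdef, QuotientGroup.mk'_apply, QuotientGroup.eq_one_iff]
  -- obtain the splitting of the quotient
  obtain ⟨F₁, F₂, hmeet, hfin, hF₂inf, hR1inf⟩ :
      ∃ F₁ F₂ : Subgroup (Q ⧸ S), F₁ ⊓ F₂ = ⊥ ∧ (F₁ ⊔ F₂).FiniteIndex ∧
        Infinite F₂ ∧ Infinite (Subgroup.comap π F₁) := by
    by_cases hRinf : Infinite R
    · -- Case A : `R` infinite.  Take `F₁ = ⊥`, `F₂ = ⊤`.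
      have hnt : ∃ y : Q ⧸ S, y ≠ 1 := by
        by_contra hcon
        push_neg at hcon
        apply hSne
        rw [eq_top_iff]
        intro q _
        exact (QuotientGroup.eq_one_iff q).mp (hcon _)
      obtain ⟨y, hy⟩ := hnt
      have hford : ¬IsOfFinOrder y := by
        intro h
        obtain ⟨k, hk, hpow⟩ := isOfFinOrder_iff_pow_eq_one.mp h
        exact hy (htf y k hk hpow)
      haveI hinfQ : Infinite (Q ⧸ S) :=
        Set.infinite_univ_iff.mp
          (((infinite_zpowers).mpr hford).mono (Set.subset_univ _))
      have htop : Infinite (⊤ : Subgroup (Q ⧸ S)) :=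
        Infinite.of_injective (fun q : Q ⧸ S => (⟨q, Subgroup.mem_top q⟩ : (⊤ : Subgroup (Q ⧸ S))))
          (fun a b h => by simpa using congrArg Subtype.val h)
      have hbot : R ≤ Subgroup.comap π (⊥ : Subgroup (Q ⧸ S)) := by
        intro q hq
        rw [Subgroup.mem_comap, Subgroup.mem_bot]
        exact hker q (hRS hq)
      exact ⟨⊥, ⊤, by simp, by rw [bot_sup_eq]; exact Subgroup.instFiniteIndexTop,
        htop, infinite_of_le hbot hRinf⟩
    · -- Case B : `R` finite.  Split the quotient along a basis.
      haveI hRfin : Finite R := not_infinite_iff_finite.mp hRinf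
      obtain ⟨g, hg⟩ := hrank
      -- the composite `ℤ × ℤ → Q → Q ⧸ S` is injective
      have hcomp : ∀ x : Multiplicative (ℤ × ℤ), π (g x) = 1 → x = 1 := by
        intro x hx
        rw [hπdef, QuotientGroup.mk'_apply, QuotientGroup.eq_one_iff] at hx
        obtain ⟨m, hm, hmem⟩ := hx
        set r : R := ⟨(g x) ^ m, hmem⟩ with hr
        have hk : 0 < orderOf r := orderOf_pos r
        have hpow : ((g x) ^ m) ^ orderOf r = 1 := by
          have := pow_orderOf_eq_one r
          have := congrArg (Subtype.val : R → Q) this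
          simpa [hr] using this
        have hone : g (x ^ (m * orderOf r)) = g 1 := by
          rw [map_pow, map_one, pow_mul]
          exact hpow
        have hxpow : x ^ (m * orderOf r) = 1 := hg hone
        -- `Multiplicative (ℤ × ℤ)` is torsion-free
        have hz : ((m * orderOf r : ℕ) : ℤ) • (Multiplicative.toAdd x) = 0 := by
          have := congrArg Multiplicative.toAdd hxpow
          rw [natCast_zsmul]
          simpa using this
        rcases smul_eq_zero.mp hz with h0 | h0
        · exact absurd (by exact_mod_cast h0) (by positivity)
        · have : Multiplicative.toAdd x = 0 := h0
          simpa using congrArg Multiplicative.ofAdd this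
      have hψinj : Function.Injective
          ((MonoidHom.toAdditiveRight (π.comp g)).toIntLinearMap) := by
        intro u v huv
        have h1 : Additive.ofMul (π (g (Multiplicative.ofAdd u)))
            = Additive.ofMul (π (g (Multiplicative.ofAdd v))) := huv
        have h2 : π (g (Multiplicative.ofAdd u * (Multiplicative.ofAdd v)⁻¹)) = 1 := by
          rw [map_mul, map_mul, map_inv, map_inv]
          rw [Additive.ofMul.injective.eq_iff] at h1
          rw [h1]
          group
        have := hcomp _ h2
        have h3 : Multiplicative.ofAdd u = Multiplicative.ofAdd v := by
          rw [mul_inv_eq_one] at this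
          exact this
        exact Multiplicative.ofAdd.injective h3
      -- hence the basis has at least two elements
      have hn2 : 2 ≤ n := by
        have hrk := LinearMap.lift_rank_le_of_injective _ hψinj
        have h1 : Module.rank ℤ (ℤ × ℤ) = 2 := by
          rw [rank_prod', Module.rank_self]
          norm_num
        rw [h1, ← b.mk_eq_rank] at hrk
        simp only [Cardinal.mk_fin, Cardinal.lift_natCast, Cardinal.lift_ofNat] at hrk
        exact_mod_cast hrk
      set i₀ : Fin n := ⟨0, by omega⟩ with hi₀
      set i₁ : Fin n := ⟨1, by omega⟩ with hi₁
      have hi01 : i₁ ∈ ({i₀}ᶜ : Set (Fin n)) := by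
        simp [hi₀, hi₁, Fin.ext_iff]
      set p₁ : Submodule ℤ (Additive (Q ⧸ S)) := Submodule.span ℤ (b '' {i₀}) with hp₁
      set p₂ : Submodule ℤ (Additive (Q ⧸ S)) := Submodule.span ℤ (b '' {i₀}ᶜ) with hp₂
      have hdisj : Disjoint p₁ p₂ :=
        b.linearIndependent.disjoint_span_image disjoint_compl_right
      have hsupp : p₁ ⊔ p₂ = ⊤ := by
        rw [hp₁, hp₂, ← Submodule.span_union, ← Set.image_union, Set.union_compl_self,
          Set.image_univ, b.span_eq]
      have hmem₀ : b i₀ ∈ p₁ := Submodule.subset_span ⟨i₀, rfl, rfl⟩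
      have hmem₁ : b i₁ ∈ p₂ := Submodule.subset_span ⟨i₁, hi01, rfl⟩
      -- basis vectors have infinite order in the quotient
      have hford : ∀ i : Fin n, ¬IsOfFinOrder (Additive.toMul (b i)) := by
        intro i h
        obtain ⟨k, hk, hpow⟩ := isOfFinOrder_iff_pow_eq_one.mp h
        have : ((k : ℤ)) • (b i) = 0 := by
          rw [natCast_zsmul]
          have := congrArg Additive.ofMul hpow
          simpa using this
        rcases smul_eq_zero.mp this with h0 | h0
        · exact absurd (by exact_mod_cast h0) (by positivity)
        · exact b.ne_zero i h0
      have hzp : ∀ i : Fin n, Infinite (Subgroup.zpowers (Additive.toMul (b i))) :=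
        fun i => Set.infinite_coe_iff.mpr (infinite_zpowers.mpr (hford i))
      refine ⟨submoduleToSubgroup p₁, submoduleToSubgroup p₂, ?_, ?_, ?_, ?_⟩
      · refine (Subgroup.eq_bot_iff_forall _).mpr fun y hy => ?_
        rw [Subgroup.mem_inf] at hy
        have : Additive.ofMul y ∈ p₁ ⊓ p₂ := ⟨hy.1, hy.2⟩
        rw [disjoint_iff.mp hdisj, Submodule.mem_bot] at this
        simpa using congrArg Additive.toMul this
      · have : submoduleToSubgroup p₁ ⊔ submoduleToSubgroup p₂ = ⊤ := by
          rw [eq_top_iff]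
          intro y _
          have : Additive.ofMul y ∈ p₁ ⊔ p₂ := by rw [hsupp]; trivial
          obtain ⟨a, ha, c, hc, hac⟩ := Submodule.mem_sup.mp this
          have hy : y = Additive.toMul a * Additive.toMul c := by
            have := congrArg Additive.toMul hac
            simpa using this.symm
          rw [hy]
          exact Subgroup.mul_mem_sup (by simpa [mem_submoduleToSubgroup] using ha)
            (by simpa [mem_submoduleToSubgroup] using hc)
        rw [this]
        exact Subgroup.instFiniteIndexTop
      · refine infinite_of_le (Subgroup.zpowers_le.mpr ?_) (hzp i₁)
        simpa [mem_submoduleToSubgroup] using hmem₁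
      · have hmaple : Subgroup.map σ (Subgroup.zpowers (Additive.toMul (b i₀)))
            ≤ Subgroup.comap π (submoduleToSubgroup p₁) := by
          rintro x ⟨y, hy, rfl⟩
          rw [Subgroup.mem_comap, hσ y]
          exact Subgroup.zpowers_le.mpr (by simpa [mem_submoduleToSubgroup] using hmem₀) hy
        exact infinite_of_le hmaple (infinite_map σ hσinj _ (hzp i₀))
  refine ⟨Subgroup.comap π F₁, Subgroup.map σ F₂, ?_, ?_, hR1inf, ?_, ?_, ?_⟩
  · -- trivial intersection
    refine (Subgroup.eq_bot_iff_forall _).mpr fun x hx => ?_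
    rw [Subgroup.mem_inf] at hx
    obtain ⟨hx1, y, hy, rfl⟩ := hx
    have : y ∈ F₁ ⊓ F₂ :=
      Subgroup.mem_inf.mpr ⟨by rwa [Subgroup.mem_comap, hσ y] at hx1, hy⟩
    rw [hmeet, Subgroup.mem_bot] at this
    rw [this, map_one]
  · -- finite index of the join
    have hsup : Subgroup.comap π F₁ ⊔ Subgroup.map σ F₂ = Subgroup.comap π (F₁ ⊔ F₂) := by
      apply le_antisymm
      · refine sup_le (Subgroup.comap_mono le_sup_left) ?_
        rintro x ⟨y, hy, rfl⟩
        rw [Subgroup.mem_comap, hσ y]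
        exact Subgroup.mem_sup_right hy
      · intro x hx
        rw [Subgroup.mem_comap] at hx
        obtain ⟨y₁, h1, y₂, h2, hyy⟩ := Subgroup.mem_sup.mp hx
        have hx2 : σ y₂ ∈ Subgroup.map σ F₂ := Subgroup.mem_map_of_mem σ h2
        have hx1 : x * (σ y₂)⁻¹ ∈ Subgroup.comap π F₁ := by
          rw [Subgroup.mem_comap, map_mul, map_inv, hσ y₂, ← hyy]
          simpa using h1
        have : x = x * (σ y₂)⁻¹ * σ y₂ := by group
        rw [this]
        exact Subgroup.mul_mem_sup hx1 hx2
    rw [hsup]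
    refine ⟨?_⟩
    rw [Subgroup.index_comap_of_surjective _ hπ]
    exact hfin.index_ne_zero
  · exact infinite_map σ hσinj F₂ hF₂inf
  · -- R' = R works since R ≤ S ≤ R₁
    have hle : R ≤ Subgroup.comap π F₁ := by
      intro q hq
      rw [Subgroup.mem_comap, hker q (hRS hq)]
      exact F₁.one_mem
    refine ⟨R, le_inf le_rfl hle, ?_⟩
    rw [Subgroup.subgroupOf_self]
    exact Subgroup.instFiniteIndexTop
  · -- the projection of R to R₂ is finite
    refine Set.Finite.subset (Set.finite_singleton 1) ?_
    rintro x ⟨hx2, r₁, hr₁, hmul⟩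
    have hle : R ≤ Subgroup.comap π F₁ := by
      intro q hq
      rw [Subgroup.mem_comap, hker q (hRS hq)]
      exact F₁.one_mem
    have hx1 : x ∈ Subgroup.comap π F₁ := by
      have : x = r₁⁻¹ * (r₁ * x) := by group
      rw [this]
      exact Subgroup.mul_mem _ (Subgroup.inv_mem _ hr₁) (hle hmul)
    obtain ⟨y, hy, rfl⟩ := hx2
    have : y ∈ F₁ ⊓ F₂ :=
      Subgroup.mem_inf.mpr ⟨by rwa [Subgroup.mem_comap, hσ y] at hx1, hy⟩
    rw [hmeet, Subgroup.mem_bot] at this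
    simp [this, map_one]
end

section
/- If X is a finitely generated group containing a free subgroup of rank 2, then X × X is not LERF. -/
open scoped Pointwise

lemma mihailova_finite_commute {G : Type*} [Group G] [Finite G] (a t : G)
    (h : t * a ^ 2 * t⁻¹ = a ^ 3) :
    (t * a * t⁻¹) * a * ((t * a * t⁻¹))⁻¹ * a⁻¹ = 1 := by
  have hn : orderOf a ≠ 0 := (orderOf_pos a).ne'
  have h23 : orderOf (a ^ 3) = orderOf (a ^ 2) := by
    have hinj := orderOf_injective (MulAut.conj t).toMonoidHom (MulEquiv.injective _) (a ^ 2)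
    simp only [MulEquiv.toMonoidHom_eq_coe, MonoidHom.coe_coe, MulAut.conj_apply] at hinj
    rw [← h]
    exact hinj
  rw [orderOf_pow, orderOf_pow] at h23
  set n := orderOf a with hdef
  have d2 : Nat.gcd n 2 ∣ n := Nat.gcd_dvd_left _ _
  have d3 : Nat.gcd n 3 ∣ n := Nat.gcd_dvd_left _ _
  have g2 : Nat.gcd n 2 ∣ 2 := Nat.gcd_dvd_right _ _
  have g3 : Nat.gcd n 3 ∣ 3 := Nat.gcd_dvd_right _ _
  have hm2 : n / Nat.gcd n 2 * Nat.gcd n 2 = n := Nat.div_mul_cancel d2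
  have hm3 : n / Nat.gcd n 3 * Nat.gcd n 3 = n := Nat.div_mul_cancel d3
  have hmne : n / Nat.gcd n 3 ≠ 0 := by
    intro h0; rw [h0, zero_mul] at hm3; exact hn hm3.symm
  have hgeq : Nat.gcd n 3 = Nat.gcd n 2 := by
    have heq2 : n / Nat.gcd n 3 * Nat.gcd n 2 = n := by rw [h23]; exact hm2
    exact Nat.eq_of_mul_eq_mul_left (Nat.pos_of_ne_zero hmne) (hm3.trans heq2.symm)
  have hg1 : Nat.gcd n 2 = 1 := by
    have hd : Nat.gcd n 2 ∣ Nat.gcd 2 3 := Nat.dvd_gcd g2 (hgeq ▸ g3)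
    simpa using hd
  -- n is odd
  have hodd : ¬ 2 ∣ n := by
    intro h2n
    have : (2 : ℕ) ∣ Nat.gcd n 2 := Nat.dvd_gcd h2n dvd_rfl
    omega
  obtain ⟨k, hk⟩ : ∃ k, 2 * k = n + 1 := ⟨(n+1)/2, by omega⟩
  have ha2k : a ^ (2 * k) = a := by
    rw [hk, pow_succ, hdef, pow_orderOf_eq_one, one_mul]
  have hconj : ∀ m : ℕ, (t * a ^ 2 * t⁻¹) ^ m = t * (a ^ 2) ^ m * t⁻¹ := by
    intro m
    simpa [MulAut.conj_apply] using (map_pow (MulAut.conj t).toMonoidHom (a ^ 2) m).symm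
  have hc : t * a * t⁻¹ = a ^ (3 * k) := by
    rw [pow_mul, ← h, hconj, ← pow_mul, ha2k]
  have hcomm : Commute (t * a * t⁻¹) a := by
    rw [hc]; exact (Commute.refl a).pow_left _
  rw [hcomm.eq]
  group

namespace MihailovaAux

noncomputable section

abbrev F := FreeGroup (Fin 2)

def ga : F := FreeGroup.of 0
def gt : F := FreeGroup.of 1
def rel : F := gt * ga ^ 2 * gt⁻¹ * (ga ^ 3)⁻¹
def wit : F := (gt * ga * gt⁻¹) * ga * (gt * ga * gt⁻¹)⁻¹ * ga⁻¹

abbrev Z := Multiplicative ℤ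

def x : Z := Multiplicative.ofAdd 1

abbrev A : Subgroup Z := Subgroup.zpowers (x ^ 2)
abbrev B : Subgroup Z := Subgroup.zpowers (x ^ 3)

lemma memA_iff {z : Z} : z ∈ A ↔ (2 : ℤ) ∣ z.toAdd := by
  rw [Subgroup.mem_zpowers_iff]
  constructor
  · rintro ⟨k, rfl⟩
    exact ⟨k, by simp [toAdd_zpow, toAdd_pow, x]; ring⟩
  · rintro ⟨k, hk⟩
    refine ⟨k, Multiplicative.toAdd.injective ?_⟩
    simp [toAdd_zpow, toAdd_pow, x]
    omega

lemma memB_iff {z : Z} : z ∈ B ↔ (3 : ℤ) ∣ z.toAdd := by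
  rw [Subgroup.mem_zpowers_iff]
  constructor
  · rintro ⟨k, rfl⟩
    exact ⟨k, by simp [toAdd_zpow, toAdd_pow, x]; ring⟩
  · rintro ⟨k, hk⟩
    refine ⟨k, Multiplicative.toAdd.injective ?_⟩
    simp [toAdd_zpow, toAdd_pow, x]
    omega

def φ : (A : Subgroup Z) ≃* (B : Subgroup Z) where
  toFun p := ⟨Multiplicative.ofAdd (3 * (p.1.toAdd / 2)), memB_iff.mpr (by simp)⟩
  invFun p := ⟨Multiplicative.ofAdd (2 * (p.1.toAdd / 3)), memA_iff.mpr (by simp)⟩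
  left_inv p := by
    obtain ⟨k, hk⟩ := memA_iff.mp p.2
    apply Subtype.ext
    apply Multiplicative.toAdd.injective
    simp
    omega
  right_inv p := by
    obtain ⟨k, hk⟩ := memB_iff.mp p.2
    apply Subtype.ext
    apply Multiplicative.toAdd.injective
    simp
    omega
  map_mul' p q := by
    obtain ⟨k, hk⟩ := memA_iff.mp p.2
    obtain ⟨l, hl⟩ := memA_iff.mp q.2
    apply Subtype.ext
    apply Multiplicative.toAdd.injective
    have : ((p * q : A) : Z).toAdd = (p : Z).toAdd + (q : Z).toAdd := by simp
    simp [this]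
    omega

abbrev H := HNNExtension Z A B φ

def θ : F →* H :=
  FreeGroup.lift (fun i => if i = 0 then HNNExtension.of x else HNNExtension.t)

lemma θ_ga : θ ga = HNNExtension.of x := by simp [θ, ga]
lemma θ_gt : θ gt = HNNExtension.t := by simp [θ, gt]

lemma hφval : ((φ ⟨x ^ 2, Subgroup.mem_zpowers _⟩ : B) : Z) = x ^ 3 := by
  apply Multiplicative.toAdd.injective
  show (Multiplicative.ofAdd (3 * ((x ^ 2 : Z).toAdd / 2))).toAdd = (x ^ 3 : Z).toAdd
  simp [toAdd_pow, x]

lemma hrel1 : (HNNExtension.t : H) * HNNExtension.of (x ^ 2) * HNNExtension.t⁻¹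
    = HNNExtension.of (x ^ 3) := by
  have h := HNNExtension.equiv_eq_conj (φ := φ) ⟨x ^ 2, Subgroup.mem_zpowers _⟩
  rw [hφval] at h
  exact h.symm

lemma θ_rel : θ rel = 1 := by
  have : θ rel = HNNExtension.t * HNNExtension.of (x ^ 2) * HNNExtension.t⁻¹
      * (HNNExtension.of (x ^ 3))⁻¹ := by
    have e2 : (HNNExtension.of (x ^ 2) : H) = (HNNExtension.of x) ^ 2 := map_pow _ _ _
    have e3 : (HNNExtension.of (x ^ 3) : H) = (HNNExtension.of x) ^ 3 := map_pow _ _ _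
    rw [e2, e3]
    simp [rel, θ_ga, θ_gt]
  rw [this, hrel1, mul_inv_cancel]

lemma xA : x ∉ A := by
  intro h
  have := memA_iff.mp h
  simp [x] at this

lemma xB : x ∉ B := by
  intro h
  have := memB_iff.mp h
  simp [x] at this

lemma xiA : x⁻¹ ∉ A := by
  intro h
  have := memA_iff.mp h
  simp [x] at this

def wrd : HNNExtension.NormalWord.ReducedWord Z A B where
  head := 1
  toList := [(1, x), (-1, x), (1, x⁻¹), (-1, x⁻¹)]
  chain := by
    refine List.isChain_cons_cons.mpr ⟨?_, List.isChain_cons_cons.mpr ⟨?_, List.isChain_cons_cons.mpr ⟨?_, ?_⟩⟩⟩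
    · intro hx; exact absurd hx xA
    · intro hx; exact absurd hx xB
    · intro hx; exact absurd hx xiA
    · exact List.isChain_singleton _

lemma θ_wit_ne : θ wit ≠ 1 := by
  intro h1
  have hprod : HNNExtension.NormalWord.ReducedWord.prod φ wrd = θ wit := by
    simp only [HNNExtension.NormalWord.ReducedWord.prod, wrd, List.map_cons, List.map_nil,
      List.prod_cons, List.prod_nil, wit, map_mul, map_inv, θ_ga, θ_gt]
    simp only [Units.val_one, zpow_one, Units.val_neg, zpow_neg, map_inv, map_one]
    group
  have := HNNExtension.ReducedWord.toList_eq_nil_of_mem_of_range φ wrd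
    (by rw [hprod, h1]; exact one_mem _)
  simp [wrd] at this

lemma wit_not_mem : wit ∉ Subgroup.normalClosure {rel} := by
  intro hmem
  have hle : Subgroup.normalClosure {rel} ≤ θ.ker :=
    Subgroup.normalClosure_le_normal (by simp [θ_rel])
  exact θ_wit_ne (hle hmem)

end
end MihailovaAux

/-- If a finitely generated group `X` contains a free group of rank 2, then
`X × X` is not LERF. -/
theorem not_LERF_of_contains_free {X : Type*} [Group X] (hX : Group.FG X)
    (hfree : ∃ f : FreeGroup (Fin 2) →* X, Function.Injective f) :
    ¬ (∀ S : Subgroup (X × X), S.FG → SubgroupSeparable S) := by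
  intro hLERF
  obtain ⟨f, hf⟩ := hfree
  classical
  open MihailovaAux in
  set g : MihailovaAux.F × MihailovaAux.F →* X × X := f.prodMap f with hgdef
  have hg : Function.Injective g := by
    rw [hgdef]
    simpa [MonoidHom.coe_prodMap] using hf.prodMap hf
  set gens : Set (MihailovaAux.F × MihailovaAux.F) :=
    {(MihailovaAux.ga, MihailovaAux.ga), (MihailovaAux.gt, MihailovaAux.gt),
      (MihailovaAux.rel, 1)} with hgens
  set S₀ : Subgroup (MihailovaAux.F × MihailovaAux.F) := Subgroup.closure gens with hS₀
  -- diagonal elements are in S₀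
  have hdiag : ∀ v : MihailovaAux.F, (v, v) ∈ S₀ := by
    intro v
    refine FreeGroup.induction_on v (one_mem _) ?_ ?_ ?_
    · intro i
      fin_cases i
      · exact Subgroup.subset_closure (by left; rfl)
      · exact Subgroup.subset_closure (by right; left; rfl)
    · intro i h
      exact inv_mem h
    · intro u v hu hv
      exact mul_mem hu hv
  -- normal closure of rel lands in S₀ on the left factor
  have hleft : ∀ u ∈ Subgroup.normalClosure {MihailovaAux.rel},
      ((u, 1) : MihailovaAux.F × MihailovaAux.F) ∈ S₀ := by
    intro u hu
    have hnc : Subgroup.normalClosure {MihailovaAux.rel}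
        = Subgroup.closure (Group.conjugatesOfSet {MihailovaAux.rel}) := rfl
    rw [hnc] at hu
    have hle : Subgroup.closure (Group.conjugatesOfSet {MihailovaAux.rel})
        ≤ S₀.comap (MonoidHom.inl MihailovaAux.F MihailovaAux.F) := by
      rw [Subgroup.closure_le]
      intro v hv
      rw [Group.mem_conjugatesOfSet_iff] at hv
      obtain ⟨s, hs, hconj⟩ := hv
      rw [Set.mem_singleton_iff] at hs
      subst hs
      obtain ⟨c, hc⟩ := isConj_iff.mp hconj
      show ((v, 1) : MihailovaAux.F × MihailovaAux.F) ∈ S₀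
      have hrew : ((v, 1) : MihailovaAux.F × MihailovaAux.F)
          = (c, c) * (MihailovaAux.rel, 1) * (c, c)⁻¹ := by
        rw [← hc]
        ext <;> simp
      rw [hrew]
      exact mul_mem (mul_mem (hdiag c)
        (Subgroup.subset_closure (by right; right; rfl))) (inv_mem (hdiag c))
    exact hle hu
  set S : Subgroup (X × X) := S₀.map g with hS
  have hSfg : S.FG := by
    rw [Subgroup.fg_iff]
    refine ⟨g '' gens, ?_, ?_⟩
    · rw [hS, hS₀, MonoidHom.map_closure]
    · exact (((Set.finite_singleton _).insert _).insert _).image _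
  have hwitS : ((f MihailovaAux.wit, 1) : X × X) ∉ S := by
    intro hmem
    obtain ⟨s, hs, hgs⟩ := hmem
    have hgw : g (MihailovaAux.wit, 1) = (f MihailovaAux.wit, 1) := by
      simp [hgdef]
    have hseq : s = (MihailovaAux.wit, 1) := hg (hgs.trans hgw.symm)
    subst hseq
    -- show wit ∈ normalClosure {rel}, contradiction
    apply MihailovaAux.wit_not_mem
    set R := Subgroup.normalClosure {MihailovaAux.rel} with hR
    set q := QuotientGroup.mk' R with hq
    set χ : MihailovaAux.F × MihailovaAux.F →* (MihailovaAux.F ⧸ R) × (MihailovaAux.F ⧸ R) :=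
      q.prodMap q with hχ
    set δ : (MihailovaAux.F ⧸ R) →* (MihailovaAux.F ⧸ R) × (MihailovaAux.F ⧸ R) :=
      (MonoidHom.id _).prod (MonoidHom.id _) with hδ
    have h1 : χ (MihailovaAux.wit, 1) ∈ S₀.map χ := Subgroup.mem_map_of_mem χ hs
    have h2 : S₀.map χ ≤ δ.range := by
      rw [hS₀, MonoidHom.map_closure, Subgroup.closure_le]
      rintro y ⟨p, hp, rfl⟩
      rcases hp with h | h | h
      · subst h; exact ⟨q MihailovaAux.ga, by simp [hχ, hδ]⟩
      · subst h; exact ⟨q MihailovaAux.gt, by simp [hχ, hδ]⟩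
      · subst h
        refine ⟨1, ?_⟩
        have : q MihailovaAux.rel = 1 := (QuotientGroup.eq_one_iff _).mpr
          (Subgroup.subset_normalClosure (Set.mem_singleton _))
        simp [hχ, hδ, this]
    obtain ⟨y, hy⟩ := h2 h1
    have hy1 : y = q MihailovaAux.wit := by
      have := congrArg Prod.fst hy
      simpa [hδ, hχ, hgdef] using this
    have hy2 : y = 1 := by
      have := congrArg Prod.snd hy
      simpa [hδ, hχ] using this
    have : q MihailovaAux.wit = 1 := hy1 ▸ hy2
    exact (QuotientGroup.eq_one_iff _).mp this
  obtain ⟨N, hNnorm, hNfi, hnot⟩ := hLERF S hSfg _ hwitS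
  apply hnot
  -- the kernel-type subgroup K of F
  set K₁ : Subgroup MihailovaAux.F := N.comap ((MonoidHom.inl X X).comp f) with hK₁
  set K₂ : Subgroup MihailovaAux.F := N.comap ((MonoidHom.inr X X).comp f) with hK₂
  haveI hK₁n : K₁.Normal := hNnorm.comap _
  haveI hK₂n : K₂.Normal := hNnorm.comap _
  have hfi : ∀ h : MihailovaAux.F →* X × X, (N.comap h).FiniteIndex := by
    intro h
    constructor
    rw [Subgroup.index_comap]
    intro h0
    obtain ⟨c, hc⟩ := Subgroup.relIndex_dvd_index_of_normal (H := N) (K := h.range)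
    rw [h0, zero_mul] at hc
    exact hNfi.index_ne_zero hc
  haveI hK₁fi : K₁.FiniteIndex := hfi _
  haveI hK₂fi : K₂.FiniteIndex := hfi _
  set K := K₁ ⊓ K₂ with hK
  haveI hKn : K.Normal := Subgroup.normal_inf_normal _ _
  haveI hKfi : K.FiniteIndex := by rw [hK]; infer_instance
  set R := Subgroup.normalClosure {MihailovaAux.rel} with hR
  set J := R ⊔ K with hJ
  haveI hJn : J.Normal := Subgroup.sup_normal R K
  haveI hJfi : J.FiniteIndex := Subgroup.finiteIndex_of_le le_sup_right
  have hwJ : MihailovaAux.wit ∈ J := by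
    set π := QuotientGroup.mk' J with hπ
    have hrelJ : MihailovaAux.rel ∈ J :=
      Subgroup.mem_sup_left (Subgroup.subset_normalClosure (Set.mem_singleton _))
    have hrel1 : π MihailovaAux.rel = 1 := (QuotientGroup.eq_one_iff _).mpr hrelJ
    have hrel : π MihailovaAux.gt * (π MihailovaAux.ga) ^ 2 * (π MihailovaAux.gt)⁻¹
        = (π MihailovaAux.ga) ^ 3 := by
      rw [MihailovaAux.rel] at hrel1
      simp only [map_mul, map_inv, map_pow, mul_inv_eq_one] at hrel1
      exact hrel1
    have hcomm := mihailova_finite_commute (π MihailovaAux.ga) (π MihailovaAux.gt) hrel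
    have : π MihailovaAux.wit = 1 := by
      rw [MihailovaAux.wit]
      simpa only [map_mul, map_inv] using hcomm
    exact (QuotientGroup.eq_one_iff _).mp this
  have hwprod : MihailovaAux.wit ∈ (↑R * ↑K : Set MihailovaAux.F) := by
    rw [← Subgroup.mul_normal R K]
    exact_mod_cast hwJ
  obtain ⟨u, hu, k, hk, huk⟩ := hwprod
  have h1 : ((f u, 1) : X × X) ∈ S := ⟨(u, 1), hleft u hu, by simp [hgdef]⟩
  have h2 : ((f k, 1) : X × X) ∈ N := (Subgroup.mem_inf.mp hk).1
  have hrw : ((f MihailovaAux.wit, 1) : X × X) = (f u, 1) * (f k, 1) := by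
    rw [← huk]
    ext <;> simp
  rw [hrw]
  exact Set.mul_mem_mul h1 h2
end

section
/- Let Γ = K ⋊ S with K abelian normal, and suppose for every nontrivial x ∈ K there exist a finite-index subgroup M of K with x ∉ M and a finite-index subgroup T of S normalizing M such that M ⋊ T has finite index in Γ. Then S is closed in the profinite topology of Γ. -/
/-- If `T` normalizes `M`, every element of `M ⊔ T` is a product `m * t`. -/
lemma mem_sup_of_normalizer {Γ : Type*} [Group Γ] {M T : Subgroup Γ}
    (hT : T ≤ Subgroup.normalizer (M : Set Γ)) {n : Γ} (hn : n ∈ M ⊔ T) :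
    ∃ m ∈ M, ∃ t ∈ T, n = m * t := by
  let P : Subgroup Γ :=
    { carrier := {g | ∃ m ∈ M, ∃ t ∈ T, g = m * t}
      one_mem' := ⟨1, one_mem _, 1, one_mem _, by simp⟩
      mul_mem' := by
        rintro a b ⟨m₁, hm₁, t₁, ht₁, rfl⟩ ⟨m₂, hm₂, t₂, ht₂, rfl⟩
        refine ⟨m₁ * (t₁ * m₂ * t₁⁻¹), mul_mem hm₁ ?_, t₁ * t₂,
          mul_mem ht₁ ht₂, by group⟩
        exact ((Subgroup.mem_normalizer_iff).mp (hT ht₁) m₂).mp hm₂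
      inv_mem' := by
        rintro a ⟨m, hm, t, ht, rfl⟩
        refine ⟨t⁻¹ * m⁻¹ * t, ?_, t⁻¹, inv_mem ht, by group⟩
        have := ((Subgroup.mem_normalizer_iff).mp (hT (inv_mem ht)) m⁻¹).mp
          (inv_mem hm)
        simpa using this }
  have hle : M ⊔ T ≤ P := by
    refine sup_le (fun m hm => ⟨m, hm, 1, one_mem _, by simp⟩)
      (fun t ht => ⟨1, one_mem _, t, ht, by simp⟩)
  exact hle hn

/-- Let `Γ = K ⋊ S` with `K` abelian normal.  If for every nontrivial `x ∈ K`
there are a finite-index subgroup `M` of `K` avoiding `x` and a finite-index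
subgroup `T` of `S` normalizing `M` with `M ⋊ T` of finite index in `Γ`, then
`S` is closed in the profinite topology of `Γ`. -/
theorem complement_closed_of_avoiding_subgroups {Γ : Type*} [Group Γ]
    (K S : Subgroup Γ) (hKn : K.Normal)
    (hKab : ∀ x y : Γ, x ∈ K → y ∈ K → x * y = y * x)
    (hdisj : K ⊓ S = ⊥) (hjoin : K ⊔ S = ⊤)
    (h : ∀ x ∈ K, x ≠ 1 →
      ∃ M T : Subgroup Γ, M ≤ K ∧ (M.subgroupOf K).FiniteIndex ∧ x ∉ M ∧
        T ≤ S ∧ (T.subgroupOf S).FiniteIndex ∧ T ≤ Subgroup.normalizer (M : Set Γ) ∧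
        (M ⊔ T).FiniteIndex) :
    @IsClosed Γ (profiniteTopology Γ) (S : Set Γ) := by
  letI : TopologicalSpace Γ := profiniteTopology Γ
  rw [← isOpen_compl_iff]
  rw [isOpen_iff_forall_mem_open]
  intro x hx
  -- write x = s * k with s ∈ S, k ∈ K
  have hxtop : x ∈ S ⊔ K := by rw [sup_comm, hjoin]; trivial
  rw [← SetLike.mem_coe, Subgroup.mul_normal S K] at hxtop
  obtain ⟨s, hs, k, hk, rfl⟩ := hxtop
  have hk1 : k ≠ 1 := by
    rintro rfl
    exact hx (by simpa using hs)
  obtain ⟨M, T, hMK, _, hxM, hTS, _, hTnorm, hMTfi⟩ := h k hk hk1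
  haveI := hMTfi
  set N := (M ⊔ T).normalCore with hN
  haveI : N.FiniteIndex := Subgroup.finiteIndex_normalCore _
  refine ⟨{y : Γ | ∃ n ∈ N, y = s * k * n}, ?_, ?_, ⟨1, one_mem _, by simp⟩⟩
  · -- the coset is disjoint from S
    rintro y ⟨n, hn, rfl⟩
    have hn' : n ∈ M ⊔ T := (M ⊔ T).normalCore_le hn
    obtain ⟨m, hm, t, ht, rfl⟩ := mem_sup_of_normalizer hTnorm hn'
    intro hyS
    -- s * k * m * t ∈ S  ⇒  k * m ∈ S
    have hkm : k * m ∈ S := by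
      have hyS' : s * (k * (m * t)) ∈ S := by
        simpa [mul_assoc] using hyS
      have : s⁻¹ * (s * (k * (m * t))) * t⁻¹ ∈ S :=
        mul_mem (mul_mem (inv_mem hs) hyS') (inv_mem (hTS ht))
      simpa [mul_assoc] using this
    have hkmK : k * m ∈ K := mul_mem hk (hMK hm)
    have : k * m ∈ K ⊓ S := ⟨hkmK, hkm⟩
    rw [hdisj, Subgroup.mem_bot] at this
    have hk' : k = m⁻¹ := eq_inv_of_mul_eq_one_left this
    exact hxM (hk' ▸ inv_mem hm)
  · -- the coset is open: it is a basic open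
    exact TopologicalSpace.GenerateOpen.basic _
      ⟨N, s * k, Subgroup.normalCore_normal _, inferInstance, rfl⟩
end
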